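/- The ratio of weighted to unweighted partition functions for f = w1^2 w2^4 satisfies lim_{n→∞} Z₁(n)/Z(n) = √2·Γ(3/4)/Γ(1/4), a nonzero constant independent of n. Consequently the leading asymptotic acceptance rate U₁ = (4√2/σ)·Z₁/Z tends to (8/σ)·Γ(3/4)/Γ(1/4). -/

import Mathlib

open Real MeasureTheory Filter

/-- Partition function for `f(w1,w2) = w1^2 w2^4`. -/
noncomputable def Zb (n : ℝ) : ℝ :=
  ∫ w1 : ℝ, ∫ w2 : ℝ,
    Real.exp (-(n * (w1 ^ 2 * w2 ^ 4))) *
      (1 / (2 * π) * Real.exp (-(w1 ^ 2 + w2 ^ 2) / 2))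

/-- Weighted partition function with weight `|w1|` for `f(w1,w2) = w1^2 w2^4`. -/
noncomputable def Z1b (n : ℝ) : ℝ :=
  ∫ w1 : ℝ, ∫ w2 : ℝ,
    |w1| * Real.exp (-(n * (w1 ^ 2 * w2 ^ 4))) *
      (1 / (2 * π) * Real.exp (-(w1 ^ 2 + w2 ^ 2) / 2))

section RatioAux
open Set

lemma gaussAbs {b : ℝ} (hb : 0 < b) : ∫ x : ℝ, |x| * rexp (-(b * x ^ 2)) = 1 / b := by
  have h0 := integral_comp_abs (f := fun y : ℝ => y * rexp (-(b * y ^ 2)))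
  have h : (∫ x : ℝ, |x| * rexp (-(b * x ^ 2)))
      = ∫ x : ℝ, (fun y : ℝ => y * rexp (-(b * y ^ 2))) |x| := by
    congr 1; funext x; simp [sq_abs]
  rw [h, h0]
  have h2 : (∫ x in Ioi (0:ℝ), x * rexp (-(b * x ^ 2)))
      = ∫ x in Ioi (0:ℝ), x ^ (1:ℝ) * rexp (-b * x ^ (2:ℝ)) := by
    refine setIntegral_congr_fun measurableSet_Ioi fun x hx => ?_
    rw [rpow_one, show ((2:ℝ)) = ((2:ℕ):ℝ) by norm_num, rpow_natCast]
    norm_num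
  rw [h2, integral_rpow_mul_exp_neg_mul_rpow (by norm_num) (by norm_num) hb]
  rw [show ((1:ℝ)+1)/2 = 1 by norm_num, Real.Gamma_one, show (-((1:ℝ)+1)/2) = -1 by norm_num, rpow_neg_one]
  field_simp

lemma intQuartic {b : ℝ} (hb : 0 < b) :
    ∫ x : ℝ, rexp (-(b * x ^ 4)) = 2 * (b ^ (-1/4 : ℝ) * Real.Gamma (1/4 + 1)) := by
  have h0 := integral_comp_abs (f := fun y : ℝ => rexp (-(b * y ^ 4)))
  have h : (∫ x : ℝ, rexp (-(b * x ^ 4)))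
      = ∫ x : ℝ, (fun y : ℝ => rexp (-(b * y ^ 4))) |x| := by
    congr 1; funext x
    simp only [pow_abs, abs_of_nonneg (by positivity : (0:ℝ) ≤ x ^ 4)]
  rw [h, h0]
  have h2 : (∫ x in Ioi (0:ℝ), rexp (-(b * x ^ 4)))
      = ∫ x in Ioi (0:ℝ), rexp (-b * x ^ (4:ℝ)) := by
    refine setIntegral_congr_fun measurableSet_Ioi fun x hx => ?_
    rw [show ((4:ℝ)) = ((4:ℕ):ℝ) by norm_num, rpow_natCast]
    norm_num
  rw [h2, integral_exp_neg_mul_rpow (by norm_num) hb]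

lemma one_le_base (t : ℝ) : (1:ℝ) ≤ 1 + 2*t^4 := by nlinarith [sq_nonneg (t^2)]

lemma base_pos (t : ℝ) : (0:ℝ) < 1 + 2*t^4 := lt_of_lt_of_le one_pos (one_le_base t)

lemma q_le_bound {p : ℝ} (hp : 1/2 ≤ p) (t : ℝ) :
    ((1:ℝ) + 2*t^4) ^ (-p) ≤ Real.sqrt 2 * (1 + t^2)⁻¹ := by
  have h1 := one_le_base t
  have hA := base_pos t
  have h2 : ((1:ℝ)+2*t^4) ^ (-p) ≤ ((1:ℝ)+2*t^4) ^ (-(1/2):ℝ) :=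
    rpow_le_rpow_of_exponent_le h1 (by linarith)
  refine h2.trans ?_
  rw [rpow_neg hA.le, ← Real.sqrt_eq_rpow]
  have hs : (1:ℝ) + t^2 ≤ Real.sqrt 2 * Real.sqrt (1 + 2*t^4) := by
    rw [← Real.sqrt_mul (by norm_num)]
    have h3 : ((1:ℝ) + t^2)^2 ≤ 2 * (1 + 2*t^4) := by nlinarith [sq_nonneg (t^2 - 1)]
    nlinarith [Real.sq_sqrt (by positivity : (0:ℝ) ≤ 2 * (1+2*t^4)),
      Real.sqrt_nonneg (2 * (1+2*t^4)), sq_nonneg (Real.sqrt (2*(1+2*t^4)) - (1+t^2))]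
  have hApos : 0 < Real.sqrt (1 + 2*t^4) := Real.sqrt_pos.2 hA
  have ht2 : (0:ℝ) < 1 + t^2 := by positivity
  rw [inv_le_iff_one_le_mul₀ hApos]
  have h4 := mul_le_mul_of_nonneg_right hs (inv_nonneg.2 ht2.le)
  rw [mul_inv_cancel₀ ht2.ne'] at h4
  calc (1:ℝ) ≤ Real.sqrt 2 * Real.sqrt (1+2*t^4) * (1+t^2)⁻¹ := h4
    _ = Real.sqrt 2 * (1+t^2)⁻¹ * Real.sqrt (1+2*t^4) := by ring

lemma integrableQ {p : ℝ} (hp : 1/2 ≤ p) :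
    Integrable (fun t : ℝ => ((1:ℝ) + 2*t^4) ^ (-p)) := by
  have hc : Continuous fun t : ℝ => ((1:ℝ) + 2*t^4) ^ (-p) := by
    apply Continuous.rpow_const (by continuity)
    exact fun t => Or.inl (ne_of_gt (base_pos t))
  refine (integrable_inv_one_add_sq.const_mul (Real.sqrt 2)).mono'
    hc.aestronglyMeasurable (ae_of_all _ fun t => ?_)
  rw [Real.norm_eq_abs, abs_of_nonneg (rpow_nonneg (base_pos t).le _)]
  exact q_le_bound hp t

lemma keyInt {p : ℝ} (hp : 1/2 ≤ p) :
    ∫ t : ℝ, ((1:ℝ) + 2*t^4) ^ (-p)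
      = (2 * ((2:ℝ) ^ (-1/4 : ℝ) * Real.Gamma (1/4 + 1))) * Real.Gamma (p - 1/4)
          / Real.Gamma p := by
  have hp0 : 0 < p := lt_of_lt_of_le (by norm_num) hp
  have hΓ : 0 < Real.Gamma p := Real.Gamma_pos_of_pos hp0
  set f : ℝ → ℝ → ℝ := fun t s => s ^ (p-1) * rexp (-((1 + 2*t^4) * s)) with hf
  have hpt : ∀ t : ℝ, ((1:ℝ)+2*t^4) ^ (-p)
      = (Real.Gamma p)⁻¹ * ∫ s in Ioi (0:ℝ), f t s := by
    intro t
    rw [show (∫ s in Ioi (0:ℝ), f t s)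
        = ∫ s in Ioi (0:ℝ), s ^ (p-1) * rexp (-((1 + 2*t^4) * s)) from rfl]
    rw [integral_rpow_mul_exp_neg_mul_Ioi hp0 (base_pos t), one_div,
      inv_rpow (base_pos t).le, ← rpow_neg (base_pos t).le]
    field_simp
  have hprod : (volume : Measure ℝ).prod (volume.restrict (Ioi 0))
      = ((volume : Measure (ℝ × ℝ))).restrict (univ ×ˢ Ioi 0) := by
    rw [Measure.volume_eq_prod, ← Measure.prod_restrict, Measure.restrict_univ]
  have hsm : AEStronglyMeasurable (Function.uncurry f)
      ((volume : Measure ℝ).prod (volume.restrict (Ioi 0))) := by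
    rw [hprod]
    refine ContinuousOn.aestronglyMeasurable ?_ (MeasurableSet.univ.prod measurableSet_Ioi)
    intro q hq
    have hs : (0:ℝ) < q.2 := (mem_prod.1 hq).2
    apply ContinuousAt.continuousWithinAt
    apply ContinuousAt.mul
    · exact (Real.continuousAt_rpow_const _ _ (Or.inl hs.ne')).comp continuousAt_snd
    · have : Continuous fun q : ℝ × ℝ => rexp (-((1 + 2*q.1^4) * q.2)) := by continuity
      exact this.continuousAt
  have hint : Integrable (Function.uncurry f)
      ((volume : Measure ℝ).prod (volume.restrict (Ioi 0))) := by
    rw [integrable_prod_iff hsm]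
    constructor
    · refine ae_of_all _ fun t => ?_
      have hb : IntegrableOn (fun s : ℝ => rexp (-s) * s ^ (p-1)) (Ioi 0) :=
        Real.GammaIntegral_convergent hp0
      refine hb.mono' ?_ ?_
      · refine ContinuousOn.aestronglyMeasurable ?_ measurableSet_Ioi
        intro s hs
        apply ContinuousAt.continuousWithinAt
        exact (Real.continuousAt_rpow_const _ _ (Or.inl (ne_of_gt hs))).mul (by fun_prop)
      · filter_upwards [ae_restrict_mem measurableSet_Ioi] with s hs
        simp only [Function.uncurry_apply_pair]
        have hs0 : (0:ℝ) < s := hs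
        rw [Real.norm_eq_abs, abs_of_nonneg
          (mul_nonneg (rpow_nonneg hs0.le _) (Real.exp_pos _).le)]
        have hee : rexp (-((1+2*t^4)*s)) ≤ rexp (-s) := by
          apply Real.exp_le_exp.2
          nlinarith [one_le_base t, hs0]
        calc s^(p-1) * rexp (-((1+2*t^4)*s)) ≤ s^(p-1) * rexp (-s) :=
              mul_le_mul_of_nonneg_left hee (rpow_nonneg hs0.le _)
          _ = rexp (-s) * s^(p-1) := mul_comm _ _
    · have heq : (fun t => ∫ s in Ioi (0:ℝ), ‖f t s‖)
          = fun t => ((1:ℝ)+2*t^4) ^ (-p) * Real.Gamma p := by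
        funext t
        have hn : ∀ s ∈ Ioi (0:ℝ), ‖f t s‖ = f t s := fun s hs => by
          rw [Real.norm_eq_abs, abs_of_nonneg
            (mul_nonneg (rpow_nonneg (le_of_lt hs) _) (Real.exp_pos _).le)]
        rw [setIntegral_congr_fun measurableSet_Ioi hn]
        rw [show (∫ s in Ioi (0:ℝ), f t s)
            = ∫ s in Ioi (0:ℝ), s ^ (p-1) * rexp (-((1 + 2*t^4) * s)) from rfl]
        rw [integral_rpow_mul_exp_neg_mul_Ioi hp0 (base_pos t), one_div,
          inv_rpow (base_pos t).le, ← rpow_neg (base_pos t).le]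
      exact heq ▸ ((integrableQ hp).mul_const _)
  calc (∫ t : ℝ, ((1:ℝ) + 2*t^4) ^ (-p))
      = ∫ t : ℝ, (Real.Gamma p)⁻¹ * ∫ s in Ioi (0:ℝ), f t s := by
        congr 1; funext t; exact hpt t
    _ = (Real.Gamma p)⁻¹ * ∫ t : ℝ, ∫ s in Ioi (0:ℝ), f t s := integral_const_mul _ _
    _ = (Real.Gamma p)⁻¹ * ∫ s in Ioi (0:ℝ), ∫ t : ℝ, f t s := by
        rw [integral_integral_swap hint]
    _ = (Real.Gamma p)⁻¹ * ∫ s in Ioi (0:ℝ),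
          (2 * ((2:ℝ) ^ (-1/4 : ℝ) * Real.Gamma (1/4 + 1)))
            * (s ^ (p - 1/4 - 1) * rexp (-(1 * s))) := by
        congr 1
        refine setIntegral_congr_fun measurableSet_Ioi fun s hs => ?_
        have hs0 : (0:ℝ) < s := hs
        have hft : (fun t : ℝ => f t s)
            = fun t : ℝ => (s^(p-1) * rexp (-s)) * rexp (-((2*s) * t^4)) := by
          funext t
          show s ^ (p-1) * rexp (-((1 + 2*t^4) * s)) = _
          rw [show -((1 + 2*t^4) * s) = -s + -((2*s) * t^4) by ring, Real.exp_add]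
          ring
        rw [hft, integral_const_mul, intQuartic (by positivity : (0:ℝ) < 2*s)]
        rw [Real.mul_rpow (by norm_num) hs0.le]
        rw [show s^(p-1) * rexp (-s) * (2 * ((2:ℝ) ^ (-1/4:ℝ) * s ^ (-1/4:ℝ)
            * Real.Gamma (1/4+1)))
          = (2 * ((2:ℝ) ^ (-1/4:ℝ) * Real.Gamma (1/4+1)))
            * ((s^(p-1) * s ^ (-1/4:ℝ)) * rexp (-(1*s))) by rw [one_mul]; ring]
        rw [← rpow_add hs0, show p - 1 + -1/4 = p - 1/4 - 1 by ring]
    _ = (Real.Gamma p)⁻¹ * ((2 * ((2:ℝ) ^ (-1/4 : ℝ) * Real.Gamma (1/4 + 1)))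
          * ∫ s in Ioi (0:ℝ), s ^ (p - 1/4 - 1) * rexp (-(1 * s))) := by
        rw [integral_const_mul]
    _ = (2 * ((2:ℝ) ^ (-1/4 : ℝ) * Real.Gamma (1/4 + 1))) * Real.Gamma (p - 1/4)
          / Real.Gamma p := by
        rw [integral_rpow_mul_exp_neg_mul_Ioi (by linarith : (0:ℝ) < p - 1/4) one_pos]
        rw [one_div_one, one_rpow, one_mul]
        field_simp

lemma tendS {p : ℝ} (hp : 1/2 ≤ p) :
    Tendsto (fun n : ℝ => ∫ t : ℝ,
        rexp (-(t^2 / (2 * Real.sqrt n))) * ((1:ℝ)+2*t^4) ^ (-p)) atTop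
      (nhds (∫ t : ℝ, ((1:ℝ)+2*t^4) ^ (-p))) := by
  have hlim : Tendsto (fun n : ℝ => ∫ t : ℝ,
      rexp (-(t^2 / (2 * Real.sqrt n))) * ((1:ℝ)+2*t^4) ^ (-p)) atTop
      (nhds (∫ t : ℝ, rexp (-(0:ℝ)) * ((1:ℝ)+2*t^4) ^ (-p))) := by
    refine tendsto_integral_filter_of_dominated_convergence
      (fun t => ((1:ℝ)+2*t^4) ^ (-p)) ?_ ?_ (integrableQ hp) ?_
    · refine Eventually.of_forall fun n => ?_
      have hc : Continuous fun t : ℝ =>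
          rexp (-(t^2 / (2 * Real.sqrt n))) * ((1:ℝ)+2*t^4) ^ (-p) := by
        refine Continuous.mul (by continuity) ?_
        exact Continuous.rpow_const (by continuity) fun t => Or.inl (ne_of_gt (base_pos t))
      exact hc.aestronglyMeasurable
    · refine Eventually.of_forall fun n => ae_of_all _ fun t => ?_
      have h1 : (0:ℝ) ≤ t^2 / (2 * Real.sqrt n) :=
        div_nonneg (sq_nonneg t) (by positivity)
      rw [Real.norm_eq_abs, abs_of_nonneg
        (mul_nonneg (Real.exp_pos _).le (rpow_nonneg (base_pos t).le _))]
      have h2 : rexp (-(t^2 / (2 * Real.sqrt n))) ≤ 1 := by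
        rw [Real.exp_le_one_iff]; linarith
      calc rexp (-(t^2 / (2 * Real.sqrt n))) * ((1:ℝ)+2*t^4) ^ (-p)
          ≤ 1 * ((1:ℝ)+2*t^4) ^ (-p) :=
            mul_le_mul_of_nonneg_right h2 (rpow_nonneg (base_pos t).le _)
        _ = ((1:ℝ)+2*t^4) ^ (-p) := one_mul _
    · refine ae_of_all _ fun t => ?_
      have hs : Tendsto Real.sqrt atTop atTop :=
        Tendsto.congr (fun x => (Real.sqrt_eq_rpow x).symm)
          (tendsto_rpow_atTop (by norm_num : (0:ℝ) < 1/2))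
      have h2 : Tendsto (fun n : ℝ => 2 * Real.sqrt n) atTop atTop :=
        hs.const_mul_atTop two_pos
      have h3 : Tendsto (fun n : ℝ => (2 * Real.sqrt n)⁻¹) atTop (nhds 0) :=
        h2.inv_tendsto_atTop
      have h4 : Tendsto (fun n : ℝ => -(t^2 / (2 * Real.sqrt n))) atTop (nhds (-(0:ℝ))) := by
        have h5 := (h3.const_mul (t^2)).neg
        simp only [mul_zero, neg_zero] at h5 ⊢
        refine h5.congr fun n => ?_
        rw [div_eq_mul_inv]
      exact ((Real.continuous_exp.tendsto _).comp h4).mul_const _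
  simpa using hlim

section
variable {n : ℝ} (hn : 0 < n)

lemma rpow_facts (hn : 0 < n) :
    (n ^ ((1:ℝ)/4)) ^ 2 = Real.sqrt n ∧ (n ^ ((1:ℝ)/4)) ^ 4 = n := by
  constructor
  · rw [← rpow_natCast (n ^ ((1:ℝ)/4)) 2, ← rpow_mul hn.le, Real.sqrt_eq_rpow]
    norm_num
  · rw [← rpow_natCast (n ^ ((1:ℝ)/4)) 4, ← rpow_mul hn.le]
    norm_num

lemma sqrt_fact (t : ℝ) :
    Real.sqrt (π / (t^4 + 1/2)) = Real.sqrt (2*π) * ((1:ℝ)+2*t^4) ^ (-(1/2):ℝ) := by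
  have h1 : π / (t^4 + 1/2) = (2*π) * ((1:ℝ)+2*t^4)⁻¹ := by
    rw [eq_comm, mul_inv_eq_iff_eq_mul₀ (base_pos t).ne', div_mul_eq_mul_div,
      eq_comm, div_eq_iff (by positivity : (t:ℝ)^4 + 1/2 ≠ 0)]
    ring
  rw [h1, Real.sqrt_mul (by positivity), Real.sqrt_inv]
  congr 1
  rw [rpow_neg (base_pos t).le, ← Real.sqrt_eq_rpow]

-- Fubini-type integrability for the Zb integrand
lemma integrand_int (hn : 0 < n) :
    Integrable (Function.uncurry (fun w1 w2 : ℝ =>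
      Real.exp (-(n * (w1 ^ 2 * w2 ^ 4))) *
        (1 / (2 * π) * Real.exp (-(w1 ^ 2 + w2 ^ 2) / 2)))) (volume.prod volume) := by
  have hb : Integrable (fun z : ℝ × ℝ =>
      (1 / (2*π) * rexp (-(1/2) * z.1^2)) * rexp (-(1/2) * z.2^2)) (volume.prod volume) :=
    Integrable.mul_prod ((integrable_exp_neg_mul_sq (by norm_num)).const_mul _)
      (integrable_exp_neg_mul_sq (by norm_num))
  refine hb.mono' ?_ (ae_of_all _ fun z => ?_)
  · have hcont : Continuous fun z : ℝ × ℝ =>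
        Real.exp (-(n * (z.1 ^ 2 * z.2 ^ 4))) *
          (1 / (2 * π) * Real.exp (-(z.1 ^ 2 + z.2 ^ 2) / 2)) := by
      have c1 : Continuous fun z : ℝ × ℝ => rexp (-(n * (z.1 ^ 2 * z.2 ^ 4))) :=
        Real.continuous_exp.comp (by continuity)
      have c2 : Continuous fun z : ℝ × ℝ => rexp (-(z.1 ^ 2 + z.2 ^ 2) / 2) :=
        Real.continuous_exp.comp (by continuity)
      exact c1.mul (continuous_const.mul c2)
    exact hcont.aestronglyMeasurable
  · obtain ⟨w1, w2⟩ := z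
    simp only [Function.uncurry_apply_pair]
    rw [Real.norm_eq_abs, abs_of_nonneg (by positivity)]
    have h1 : rexp (-(n * (w1 ^ 2 * w2 ^ 4))) ≤ 1 := by
      rw [Real.exp_le_one_iff]
      have : (0:ℝ) ≤ n * (w1^2 * w2^4) := by positivity
      linarith
    have h2 : rexp (-(w1 ^ 2 + w2 ^ 2) / 2) = rexp (-(1/2) * w1^2) * rexp (-(1/2) * w2^2) := by
      rw [← Real.exp_add]; congr 1; ring
    calc rexp (-(n * (w1 ^ 2 * w2 ^ 4))) * (1 / (2 * π) * rexp (-(w1 ^ 2 + w2 ^ 2) / 2))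
        ≤ 1 * (1 / (2 * π) * rexp (-(w1 ^ 2 + w2 ^ 2) / 2)) := by
          have : (0:ℝ) ≤ 1 / (2*π) * rexp (-(w1 ^ 2 + w2 ^ 2) / 2) := by positivity
          exact mul_le_mul_of_nonneg_right h1 this
      _ = 1 / (2*π) * rexp (-(1/2) * w1^2) * rexp (-(1/2) * w2^2) := by rw [one_mul, h2]; ring

lemma Zb_eq (hn : 0 < n) :
    Zb n = n ^ ((-1:ℝ)/4) * (((2*π)⁻¹ * Real.sqrt (2*π)) *
      ∫ t : ℝ, rexp (-(t^2 / (2 * Real.sqrt n))) * ((1:ℝ)+2*t^4) ^ (-(1/2):ℝ)) := by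
  obtain ⟨hc2, hc4⟩ := rpow_facts hn
  set c : ℝ := n ^ ((1:ℝ)/4) with hcdef
  have hc : 0 < c := rpow_pos_of_pos hn _
  have step1 : Zb n = ∫ w2 : ℝ, (1 / (2*π) * rexp (-(w2^2)/2)) * Real.sqrt (π / (n*w2^4 + 1/2)) := by
    rw [Zb, integral_integral_swap (integrand_int hn)]
    refine integral_congr_ae (ae_of_all _ fun w2 => ?_)
    beta_reduce
    have h1 : (fun w1 : ℝ => Real.exp (-(n * (w1 ^ 2 * w2 ^ 4))) *
        (1 / (2 * π) * Real.exp (-(w1 ^ 2 + w2 ^ 2) / 2)))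
        = fun w1 : ℝ => (1 / (2*π) * rexp (-(w2^2)/2)) * rexp (-((n*w2^4 + 1/2)) * w1^2) := by
      funext w1
      rw [show -((n*w2^4 + 1/2)) * w1^2 = -(n * (w1^2 * w2^4)) + (-(1/2) * w1^2) by ring,
        Real.exp_add, show (-(w1 ^ 2 + w2 ^ 2) / 2 : ℝ) = -(w2^2)/2 + (-(1/2) * w1^2) by ring,
        Real.exp_add]
      ring
    rw [h1, integral_const_mul, integral_gaussian]
  have step2 : Zb n = c⁻¹ * ∫ t : ℝ,
      (1 / (2*π) * rexp (-((t/c)^2)/2)) * Real.sqrt (π / (n*(t/c)^4 + 1/2)) := by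
    rw [step1]
    have := MeasureTheory.Measure.integral_comp_div
      (g := fun w : ℝ => (1 / (2*π) * rexp (-(w^2)/2)) * Real.sqrt (π / (n*w^4 + 1/2))) c
    rw [this, abs_of_pos hc, smul_eq_mul, ← mul_assoc, inv_mul_cancel₀ hc.ne', one_mul]
  rw [step2]
  have step3 : ∀ t : ℝ,
      (1 / (2*π) * rexp (-((t/c)^2)/2)) * Real.sqrt (π / (n*(t/c)^4 + 1/2))
      = ((2*π)⁻¹ * Real.sqrt (2*π)) * (rexp (-(t^2 / (2 * Real.sqrt n))) * ((1:ℝ)+2*t^4) ^ (-(1/2):ℝ)) := by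
    intro t
    have e1 : -((t/c)^2)/2 = -(t^2 / (2 * Real.sqrt n)) := by
      rw [div_pow, hc2]; ring
    have e2 : n*(t/c)^4 = t^4 := by
      rw [div_pow, hc4]; field_simp
    rw [e1, e2, sqrt_fact]
    field_simp
  rw [show (fun t : ℝ => (1 / (2*π) * rexp (-((t/c)^2)/2)) * Real.sqrt (π / (n*(t/c)^4 + 1/2)))
      = fun t : ℝ => ((2*π)⁻¹ * Real.sqrt (2*π)) *
        (rexp (-(t^2 / (2 * Real.sqrt n))) * ((1:ℝ)+2*t^4) ^ (-(1/2):ℝ)) from funext step3,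
    integral_const_mul]
  rw [show ((-1:ℝ)/4) = -((1:ℝ)/4) by norm_num, rpow_neg hn.le]
end

section
variable {n : ℝ}

lemma inv_fact (t : ℝ) : 1/(t^4 + 1/2) = 2 * ((1:ℝ)+2*t^4) ^ (-(1:ℝ)) := by
  rw [rpow_neg_one, eq_comm, mul_inv_eq_iff_eq_mul₀ (base_pos t).ne',
    div_mul_eq_mul_div, eq_comm, div_eq_iff (by positivity : (t:ℝ)^4 + 1/2 ≠ 0)]
  ring

lemma integrand_int1 (hn : 0 < n) :
    Integrable (Function.uncurry (fun w1 w2 : ℝ =>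
      |w1| * Real.exp (-(n * (w1 ^ 2 * w2 ^ 4))) *
        (1 / (2 * π) * Real.exp (-(w1 ^ 2 + w2 ^ 2) / 2)))) (volume.prod volume) := by
  have hb : Integrable (fun z : ℝ × ℝ =>
      (1 / (2*π) * |z.1 * rexp (-(1/2) * z.1^2)|) * rexp (-(1/2) * z.2^2)) (volume.prod volume) :=
    Integrable.mul_prod (((integrable_mul_exp_neg_mul_sq (by norm_num : (0:ℝ) < 1/2)).abs).const_mul _)
      (integrable_exp_neg_mul_sq (by norm_num))
  refine hb.mono' ?_ (ae_of_all _ fun z => ?_)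
  · have c1 : Continuous fun z : ℝ × ℝ => rexp (-(n * (z.1 ^ 2 * z.2 ^ 4))) :=
      Real.continuous_exp.comp (by continuity)
    have c2 : Continuous fun z : ℝ × ℝ => rexp (-(z.1 ^ 2 + z.2 ^ 2) / 2) :=
      Real.continuous_exp.comp (by continuity)
    exact (((continuous_fst.abs).mul c1).mul (continuous_const.mul c2)).aestronglyMeasurable
  · obtain ⟨w1, w2⟩ := z
    simp only [Function.uncurry_apply_pair]
    rw [Real.norm_eq_abs, abs_of_nonneg (by positivity)]
    have h1 : rexp (-(n * (w1 ^ 2 * w2 ^ 4))) ≤ 1 := by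
      rw [Real.exp_le_one_iff]
      have : (0:ℝ) ≤ n * (w1^2 * w2^4) := by positivity
      linarith
    have h2 : rexp (-(w1 ^ 2 + w2 ^ 2) / 2) = rexp (-(1/2) * w1^2) * rexp (-(1/2) * w2^2) := by
      rw [← Real.exp_add]; congr 1; ring
    have h3 : |w1 * rexp (-(1/2) * w1^2)| = |w1| * rexp (-(1/2) * w1^2) := by
      rw [abs_mul, abs_of_pos (Real.exp_pos _)]
    calc |w1| * rexp (-(n * (w1 ^ 2 * w2 ^ 4))) * (1 / (2 * π) * rexp (-(w1 ^ 2 + w2 ^ 2) / 2))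
        ≤ |w1| * 1 * (1 / (2 * π) * rexp (-(w1 ^ 2 + w2 ^ 2) / 2)) := by
          have hnn : (0:ℝ) ≤ 1 / (2*π) * rexp (-(w1 ^ 2 + w2 ^ 2) / 2) := by positivity
          exact mul_le_mul_of_nonneg_right
            (mul_le_mul_of_nonneg_left h1 (abs_nonneg w1)) hnn
      _ = 1 / (2*π) * |w1 * rexp (-(1/2) * w1^2)| * rexp (-(1/2) * w2^2) := by
          rw [h3, h2]; ring

lemma Z1b_eq (hn : 0 < n) :
    Z1b n = n ^ ((-1:ℝ)/4) * (((2*π)⁻¹ * 2) *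
      ∫ t : ℝ, rexp (-(t^2 / (2 * Real.sqrt n))) * ((1:ℝ)+2*t^4) ^ (-(1:ℝ))) := by
  obtain ⟨hc2, hc4⟩ := rpow_facts hn
  set c : ℝ := n ^ ((1:ℝ)/4) with hcdef
  have hc : 0 < c := rpow_pos_of_pos hn _
  have step1 : Z1b n = ∫ w2 : ℝ, (1 / (2*π) * rexp (-(w2^2)/2)) * (1 / (n*w2^4 + 1/2)) := by
    rw [Z1b, integral_integral_swap (integrand_int1 hn)]
    refine integral_congr_ae (ae_of_all _ fun w2 => ?_)
    beta_reduce
    have h1 : (fun w1 : ℝ => |w1| * Real.exp (-(n * (w1 ^ 2 * w2 ^ 4))) *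
        (1 / (2 * π) * Real.exp (-(w1 ^ 2 + w2 ^ 2) / 2)))
        = fun w1 : ℝ => (1 / (2*π) * rexp (-(w2^2)/2)) * (|w1| * rexp (-((n*w2^4 + 1/2)) * w1^2)) := by
      funext w1
      rw [show -((n*w2^4 + 1/2)) * w1^2 = -(n * (w1^2 * w2^4)) + (-(1/2) * w1^2) by ring,
        Real.exp_add, show (-(w1 ^ 2 + w2 ^ 2) / 2 : ℝ) = -(w2^2)/2 + (-(1/2) * w1^2) by ring,
        Real.exp_add]
      ring
    rw [h1, integral_const_mul]
    rw [show (fun w1 : ℝ => |w1| * rexp (-((n*w2^4 + 1/2)) * w1^2))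
        = fun w1 : ℝ => |w1| * rexp (-((n*w2^4 + 1/2) * w1^2)) from by
      funext w1; rw [neg_mul]]
    rw [gaussAbs (by positivity : (0:ℝ) < n*w2^4 + 1/2)]
  have step2 : Z1b n = c⁻¹ * ∫ t : ℝ,
      (1 / (2*π) * rexp (-((t/c)^2)/2)) * (1 / (n*(t/c)^4 + 1/2)) := by
    rw [step1]
    have hcd := MeasureTheory.Measure.integral_comp_div
      (g := fun w : ℝ => (1 / (2*π) * rexp (-(w^2)/2)) * (1 / (n*w^4 + 1/2))) c
    rw [hcd, abs_of_pos hc, smul_eq_mul, ← mul_assoc, inv_mul_cancel₀ hc.ne', one_mul]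
  rw [step2]
  have step3 : ∀ t : ℝ,
      (1 / (2*π) * rexp (-((t/c)^2)/2)) * (1 / (n*(t/c)^4 + 1/2))
      = ((2*π)⁻¹ * 2) * (rexp (-(t^2 / (2 * Real.sqrt n))) * ((1:ℝ)+2*t^4) ^ (-(1:ℝ))) := by
    intro t
    have e1 : -((t/c)^2)/2 = -(t^2 / (2 * Real.sqrt n)) := by
      rw [div_pow, hc2]; ring
    have e2 : n*(t/c)^4 = t^4 := by
      rw [div_pow, hc4]; field_simp
    rw [e1, e2, inv_fact]
    ring
  rw [show (fun t : ℝ => (1 / (2*π) * rexp (-((t/c)^2)/2)) * (1 / (n*(t/c)^4 + 1/2)))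
      = fun t : ℝ => ((2*π)⁻¹ * 2) *
        (rexp (-(t^2 / (2 * Real.sqrt n))) * ((1:ℝ)+2*t^4) ^ (-(1:ℝ))) from funext step3,
    integral_const_mul]
  rw [show ((-1:ℝ)/4) = -((1:ℝ)/4) by norm_num, rpow_neg hn.le]
end

end RatioAux

/-- `Z₁(n)/Z(n) → √2·Γ(3/4)/Γ(1/4)` as `n → ∞`, and consequently the leading
acceptance rate `U₁ = (4√2/σ)·Z₁/Z` tends to `(8/σ)·Γ(3/4)/Γ(1/4)`. -/
theorem ratio_Z1b_Zb :
    Tendsto (fun n : ℝ => Z1b n / Zb n) atTop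
      (nhds (Real.sqrt 2 * Real.Gamma (3/4) / Real.Gamma (1/4))) ∧
    ∀ σ : ℝ, σ > 0 →
      Tendsto (fun n : ℝ => 4 * Real.sqrt 2 / σ * (Z1b n / Zb n)) atTop
        (nhds (8 / σ * Real.Gamma (3/4) / Real.Gamma (1/4))) := by
  have hK : (0:ℝ) < 2 * ((2:ℝ) ^ (-1/4 : ℝ) * Real.Gamma (1/4 + 1)) := by positivity
  set K : ℝ := 2 * ((2:ℝ) ^ (-1/4 : ℝ) * Real.Gamma (1/4 + 1)) with hKdef
  have hI1 : (∫ t : ℝ, ((1:ℝ)+2*t^4) ^ (-(1:ℝ)))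
      = K * Real.Gamma (3/4) / Real.Gamma 1 := by
    rw [keyInt (by norm_num : (1:ℝ)/2 ≤ 1), show (1:ℝ) - 1/4 = 3/4 by norm_num]
  have hI2 : (∫ t : ℝ, ((1:ℝ)+2*t^4) ^ (-(1/2):ℝ))
      = K * Real.Gamma (1/4) / Real.Gamma (1/2) := by
    rw [keyInt (le_refl ((1:ℝ)/2)), show (1:ℝ)/2 - 1/4 = 1/4 by norm_num]
  have hG14 : (0:ℝ) < Real.Gamma (1/4) := Real.Gamma_pos_of_pos (by norm_num)
  have hG34 : (0:ℝ) < Real.Gamma (3/4) := Real.Gamma_pos_of_pos (by norm_num)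
  have hI2pos : (0:ℝ) < ∫ t : ℝ, ((1:ℝ)+2*t^4) ^ (-(1/2):ℝ) := by
    rw [hI2, Real.Gamma_one_half_eq]
    positivity
  have hc2pos : (0:ℝ) < (2*π)⁻¹ * Real.sqrt (2*π) := by positivity
  have hmain : Tendsto (fun n : ℝ =>
      (((2*π)⁻¹ * 2) * ∫ t : ℝ, rexp (-(t^2 / (2 * Real.sqrt n))) * ((1:ℝ)+2*t^4) ^ (-(1:ℝ)))
      / (((2*π)⁻¹ * Real.sqrt (2*π)) *
          ∫ t : ℝ, rexp (-(t^2 / (2 * Real.sqrt n))) * ((1:ℝ)+2*t^4) ^ (-(1/2):ℝ))) atTop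
      (nhds ((((2*π)⁻¹ * 2) * ∫ t : ℝ, ((1:ℝ)+2*t^4) ^ (-(1:ℝ)))
        / (((2*π)⁻¹ * Real.sqrt (2*π)) * ∫ t : ℝ, ((1:ℝ)+2*t^4) ^ (-(1/2):ℝ)))) := by
    refine Tendsto.div (Tendsto.const_mul _ (tendS (by norm_num)))
      (Tendsto.const_mul _ (tendS (le_refl ((1:ℝ)/2)))) ?_
    positivity
  have hVal : (((2*π)⁻¹ * 2) * ∫ t : ℝ, ((1:ℝ)+2*t^4) ^ (-(1:ℝ)))
        / (((2*π)⁻¹ * Real.sqrt (2*π)) * ∫ t : ℝ, ((1:ℝ)+2*t^4) ^ (-(1/2):ℝ))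
      = Real.sqrt 2 * Real.Gamma (3/4) / Real.Gamma (1/4) := by
    rw [hI1, hI2, Real.Gamma_one, Real.Gamma_one_half_eq]
    have hs : Real.sqrt 2 * Real.sqrt (2*π) = 2 * Real.sqrt π := by
      rw [← Real.sqrt_mul (by norm_num) (2*π), show (2:ℝ)*(2*π) = 4*π by ring,
        Real.sqrt_mul (by norm_num) π,
        show Real.sqrt 4 = 2 by
          rw [show (4:ℝ) = 2^2 by norm_num, Real.sqrt_sq (by norm_num : (0:ℝ) ≤ 2)]]
    have hπ : (0:ℝ) < π := Real.pi_pos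
    have hsπ : (0:ℝ) < Real.sqrt π := Real.sqrt_pos.2 hπ
    have hs2π : (0:ℝ) < Real.sqrt (2*π) := Real.sqrt_pos.2 (by positivity)
    have hs2' : Real.sqrt 2 ^ 2 = 2 := Real.sq_sqrt (by norm_num)
    field_simp
    linear_combination -hs
  have hfirst : Tendsto (fun n : ℝ => Z1b n / Zb n) atTop
      (nhds (Real.sqrt 2 * Real.Gamma (3/4) / Real.Gamma (1/4))) := by
    rw [← hVal]
    refine hmain.congr' ?_
    filter_upwards [eventually_gt_atTop (0:ℝ)] with n hn
    rw [Zb_eq hn, Z1b_eq hn]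
    exact (mul_div_mul_left _ _ (ne_of_gt (rpow_pos_of_pos hn ((-1:ℝ)/4)))).symm
  refine ⟨hfirst, fun σ hσ => ?_⟩
  have h2 : Tendsto (fun n : ℝ => 4 * Real.sqrt 2 / σ * (Z1b n / Zb n)) atTop
      (nhds (4 * Real.sqrt 2 / σ * (Real.sqrt 2 * Real.Gamma (3/4) / Real.Gamma (1/4)))) :=
    hfirst.const_mul _
  have hs2 : Real.sqrt 2 * Real.sqrt 2 = 2 := Real.mul_self_sqrt (by norm_num)
  have : 4 * Real.sqrt 2 / σ * (Real.sqrt 2 * Real.Gamma (3/4) / Real.Gamma (1/4))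
      = 8 / σ * Real.Gamma (3/4) / Real.Gamma (1/4) := by
    field_simp
    linear_combination 4 * hs2
  rwa [this] at h2
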